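/- Let φ : (0,1] → (0,∞) be nondecreasing and suppose there exist c > 0 and, for every d > 0, a sequence h_n → 0 with φ(h_n) ≤ h_n^d. Then for every θ ∈ (0,1), the inequality ∫₀¹ φ(h t) dt ≥ θ·φ(h) fails for some h ∈ (0,1]; i.e. inf_{h∈(0,1]} (∫₀¹φ(ht)dt)/φ(h) = 0. -/

import Mathlib

open MeasureTheory

theorem stmt17 (φ : ℝ → ℝ) (hmono : MonotoneOn φ (Set.Ioc 0 1))
    (hpos : ∀ h ∈ Set.Ioc (0:ℝ) 1, 0 < φ h)
    (hint : IntervalIntegrable φ volume 0 1)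
    (hdecay : ∀ d : ℝ, 0 < d → ∃ u : ℕ → ℝ,
      (∀ n, u n ∈ Set.Ioc (0:ℝ) 1) ∧ Filter.Tendsto u Filter.atTop (nhds 0) ∧
      ∀ n, φ (u n) ≤ (u n) ^ d) :
    ∀ θ : ℝ, 0 < θ → θ < 1 →
      ∃ h ∈ Set.Ioc (0:ℝ) 1, (∫ t in (0:ℝ)..1, φ (h * t)) < θ * φ h := by
  intro θ hθ0 hθ1
  by_contra hcon
  push_neg at hcon
  set F : ℝ → ℝ := fun h => ∫ t in (0:ℝ)..h, φ t with hF
  -- integrability on subintervals of [0,1]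
  have hIntOn : ∀ a b : ℝ, 0 ≤ a → a ≤ b → b ≤ 1 → IntervalIntegrable φ volume a b := by
    intro a b ha hab hb
    refine hint.mono_set ?_
    rw [Set.uIcc_of_le hab, Set.uIcc_of_le (by norm_num : (0:ℝ) ≤ 1)]
    exact Set.Icc_subset_Icc ha hb
  -- Step B : F b - F a ≤ (b - a) * φ b for 0 ≤ a ≤ b ≤ 1
  have stepB : ∀ a b : ℝ, 0 ≤ a → a ≤ b → b ≤ 1 → F b - F a ≤ (b - a) * φ b := by
    intro a b ha hab hb1
    have hsplit : F a + ∫ t in a..b, φ t = F b :=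
      intervalIntegral.integral_add_adjacent_intervals
        (hIntOn 0 a le_rfl ha (le_trans hab hb1)) (hIntOn a b ha hab hb1)
    have hsub : Set.Ioc a b ⊆ Set.Ioc 0 1 := Set.Ioc_subset_Ioc ha hb1
    have hbd : (∫ t in a..b, φ t) ≤ (b - a) * φ b := by
      rw [intervalIntegral.integral_of_le hab]
      calc ∫ t in Set.Ioc a b, φ t ≤ ∫ _t in Set.Ioc a b, φ b := by
            refine setIntegral_mono_on ((hIntOn a b ha hab hb1).1)
              (integrableOn_const measure_Ioc_lt_top.ne) measurableSet_Ioc ?_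
            intro x hx
            rcases eq_or_lt_of_le hx.2 with hxb | hxb
            · exact le_of_eq (by rw [hxb])
            · exact hmono (hsub hx) ⟨lt_of_le_of_lt ha (hx.1.trans_le hx.2), hb1⟩ hx.2
        _ = (b - a) * φ b := by
            simp [Real.volume_Ioc, ENNReal.toReal_ofReal (sub_nonneg.2 hab), smul_eq_mul, hab]
    linarith
  -- F is nondecreasing on [0,1]
  have stepMono : ∀ a b : ℝ, 0 ≤ a → a ≤ b → b ≤ 1 → F a ≤ F b := by
    intro a b ha hab hb1
    have hsplit : F a + ∫ t in a..b, φ t = F b :=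
      intervalIntegral.integral_add_adjacent_intervals
        (hIntOn 0 a le_rfl ha (le_trans hab hb1)) (hIntOn a b ha hab hb1)
    have : 0 ≤ ∫ t in a..b, φ t := by
      rw [intervalIntegral.integral_of_le hab]
      refine setIntegral_nonneg measurableSet_Ioc ?_
      intro x hx
      exact (hpos x (Set.Ioc_subset_Ioc ha hb1 hx)).le
    linarith
  have hF0 : F 0 = 0 := intervalIntegral.integral_same
  -- Step A : θ * (h * φ h) ≤ F h for h ∈ (0,1]
  have stepA : ∀ h : ℝ, h ∈ Set.Ioc (0:ℝ) 1 → θ * (h * φ h) ≤ F h := by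
    intro h hh
    have hne : h ≠ 0 := ne_of_gt hh.1
    have hsub : (∫ t in (0:ℝ)..1, φ (h * t)) = h⁻¹ * F h := by
      rw [intervalIntegral.integral_comp_mul_left φ hne]
      simp [hF, smul_eq_mul]
    have h1 := hcon h hh
    rw [hsub] at h1
    have h2 := mul_le_mul_of_nonneg_left h1 (le_of_lt hh.1)
    calc θ * (h * φ h) = h * (θ * φ h) := by ring
      _ ≤ h * (h⁻¹ * F h) := h2
      _ = F h := by field_simp
  -- F h ≤ h * φ h for h ∈ (0,1]
  have stepUp : ∀ h : ℝ, h ∈ Set.Ioc (0:ℝ) 1 → F h ≤ h * φ h := by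
    intro h hh
    have := stepB 0 h le_rfl hh.1.le hh.2
    rw [hF0] at this
    linarith
  -- F 1 > 0
  have hF1 : 0 < F 1 := by
    have h12 : (1/2 : ℝ) ∈ Set.Ioc (0:ℝ) 1 := by norm_num
    have h1 := stepA (1/2) h12
    have h2 := hpos _ h12
    have h3 := stepMono (1/2) 1 (by norm_num) (by norm_num) le_rfl
    nlinarith
  -- the contraction constant
  obtain ⟨l, hl⟩ : ∃ l : ℝ, l = 1 - θ/2 := ⟨_, rfl⟩
  have hl0 : (1/2 : ℝ) < l := by rw [hl]; linarith
  have hl1 : l < 1 := by rw [hl]; linarith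
  have hlpos : 0 < l := by linarith
  -- Step D : F (l * h) ≥ F h / 2 for h ∈ (0,1]
  have stepD : ∀ h : ℝ, h ∈ Set.Ioc (0:ℝ) 1 → F h / 2 ≤ F (l * h) := by
    intro h hh
    have hBh := stepB (l*h) h (mul_nonneg hlpos.le hh.1.le) (by nlinarith [hh.1]) hh.2
    have hAh := stepA h hh
    have heq : (h - l*h) * φ h = (θ/2) * (h * φ h) := by rw [hl]; ring
    rw [heq] at hBh
    have hφpos := hpos h hh
    have : (θ/2) * (h * φ h) ≤ F h / 2 := by nlinarith [hh.1]
    linarith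
  -- iterate : (1/2)^n * F 1 ≤ F (l^n)
  have hlmem : ∀ n : ℕ, l^n ∈ Set.Ioc (0:ℝ) 1 :=
    fun n => ⟨pow_pos hlpos n, pow_le_one₀ hlpos.le hl1.le⟩
  have stepE : ∀ n : ℕ, (1/2 : ℝ)^n * F 1 ≤ F (l^n) := by
    intro n
    induction n with
    | zero => simp
    | succ n ih =>
        have := stepD (l^n) (hlmem n)
        calc (1/2 : ℝ)^(n+1) * F 1 = ((1/2)^n * F 1) / 2 := by ring
          _ ≤ F (l^n) / 2 := by linarith
          _ ≤ F (l * l^n) := this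
          _ = F (l^(n+1)) := by rw [pow_succ, mul_comm]
  -- φ (l^n) ≥ r^n * F 1 with r = 1/(2l)
  obtain ⟨r, hr⟩ : ∃ r : ℝ, r = 1/(2*l) := ⟨_, rfl⟩
  have hr0 : 0 < r := by rw [hr]; positivity
  have hr1 : r < 1 := by
    rw [hr, div_lt_one (by linarith : (0:ℝ) < 2*l)]; linarith
  have stepPhi : ∀ n : ℕ, r^n * F 1 ≤ φ (l^n) := by
    intro n
    have h1 := stepE n
    have h2 := stepUp (l^n) (hlmem n)
    have hln : 0 < l^n := pow_pos hlpos n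
    have h3 : (1/2 : ℝ)^n * F 1 ≤ l^n * φ (l^n) := le_trans h1 h2
    have hrl : r^n * l^n = (1/2 : ℝ)^n := by
      rw [← mul_pow]
      congr 1
      rw [hr]
      field_simp
    rw [← hrl] at h3
    nlinarith
  -- exponent
  obtain ⟨α, hα⟩ : ∃ a : ℝ, a = Real.log r / Real.log l := ⟨_, rfl⟩
  have hlogl : Real.log l < 0 := Real.log_neg hlpos hl1
  have hlogr : Real.log r < 0 := Real.log_neg hr0 hr1
  have hα0 : 0 < α := by rw [hα]; exact div_pos_of_neg_of_neg hlogr hlogl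
  have hlα : l ^ α = r := by
    rw [Real.rpow_def_of_pos hlpos, hα, mul_div_cancel₀ _ (ne_of_lt hlogl)]
    exact Real.exp_log hr0
  -- lower bound φ h ≥ r * h^α * F 1 on (0,1]
  have lower : ∀ h : ℝ, h ∈ Set.Ioc (0:ℝ) 1 → r * h ^ α * F 1 ≤ φ h := by
    intro h hh
    have hex : ∃ m : ℕ, l^m < h := exists_pow_lt_of_lt_one hh.1 hl1
    classical
    have hmlt : l ^ Nat.find hex < h := Nat.find_spec hex
    have hm1 : 1 ≤ Nat.find hex := by
      rcases Nat.eq_zero_or_pos (Nat.find hex) with h0 | h1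
      · rw [h0, pow_zero] at hmlt
        exact absurd hmlt (not_lt.2 hh.2)
      · exact h1
    set k := Nat.find hex - 1 with hk
    have hksucc : Nat.find hex = k + 1 := by omega
    have hkge : h ≤ l ^ k := not_lt.1 (Nat.find_min hex (by omega))
    rw [hksucc] at hmlt
    have hstep1 : φ (l^(k+1)) ≤ φ h := hmono (hlmem (k+1)) hh hmlt.le
    have hstep2 := stepPhi (k+1)
    have hstep3 : h ^ α ≤ r ^ k := by
      calc h ^ α ≤ (l^k) ^ α := Real.rpow_le_rpow hh.1.le hkge hα0.le
        _ = (l ^ α) ^ k := by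
            rw [← Real.rpow_natCast l k, ← Real.rpow_mul hlpos.le,
              mul_comm, Real.rpow_mul hlpos.le, Real.rpow_natCast]
        _ = r ^ k := by rw [hlα]
    have hkey : r * h ^ α * F 1 ≤ r * r ^ k * F 1 := by
      have h5 := mul_le_mul_of_nonneg_left hstep3 hr0.le
      have h6 := mul_le_mul_of_nonneg_right h5 hF1.le
      linarith
    calc r * h ^ α * F 1 ≤ r * r ^ k * F 1 := hkey
      _ = r ^ (k+1) * F 1 := by ring
      _ ≤ φ (l^(k+1)) := hstep2
      _ ≤ φ h := hstep1
  -- contradiction with decay at d = α + 1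
  obtain ⟨u, humem, hulim, hudec⟩ := hdecay (α + 1) (by linarith)
  have hev : ∀ᶠ n in Filter.atTop, u n < r * F 1 :=
    hulim.eventually_lt_const (by positivity)
  obtain ⟨n, hn⟩ := hev.exists
  have h1 := lower (u n) (humem n)
  have h2 := hudec n
  have hu0 : 0 < u n := (humem n).1
  have h3 : (u n) ^ (α + 1) = (u n) ^ α * u n := Real.rpow_add_one (ne_of_gt hu0) α
  have h4 : 0 < (u n) ^ α := Real.rpow_pos_of_pos hu0 α
  nlinarith
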